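/- Let G be a bipartite simple graph on n vertices with a vertex weight ω. Then LE_ω(G) ≥ E(G), i.e., the weighted Laplacian energy of G is at least the (adjacency) energy of G. -/

import Mathlib

open scoped BigOperators
open Matrix

namespace WLEaux

variable {n : ℕ}

private lemma star_eq_transpose (V : Matrix (Fin n) (Fin n) ℝ) : star V = Vᵀ := by
  ext i j; simp [Matrix.star_apply]

/-- Variational bound: for Hermitian `M` and `X` with quadratic form bounded by the
identity's, `tr((M - c•1) X) ≤ Σ |μ i - c|`. -/
private lemma trace_shift_mul_le (M : Matrix (Fin n) (Fin n) ℝ) (hM : M.IsHermitian)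
    (c : ℝ) (X : Matrix (Fin n) (Fin n) ℝ)
    (hX : ∀ v : Fin n → ℝ, |v ⬝ᵥ (X *ᵥ v)| ≤ v ⬝ᵥ v) :
    ((M - c • 1) * X).trace ≤ ∑ i, |hM.eigenvalues i - c| := by
  set V : Matrix (Fin n) (Fin n) ℝ := (hM.eigenvectorUnitary : Matrix (Fin n) (Fin n) ℝ) with hV
  have hVV : star V * V = 1 := Matrix.mem_unitaryGroup_iff'.mp hM.eigenvectorUnitary.2
  have hVV' : V * star V = 1 := Matrix.mem_unitaryGroup_iff.mp hM.eigenvectorUnitary.2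
  have hspec : M = V * diagonal hM.eigenvalues * star V := by
    have := hM.spectral_theorem; simpa using this
  have hshift : M - c • 1 = V * diagonal (fun i => hM.eigenvalues i - c) * star V := by
    have h1 : (c • (1 : Matrix (Fin n) (Fin n) ℝ)) = V * diagonal (fun _ => c) * star V := by
      have : diagonal (fun _ : Fin n => c) = c • (1 : Matrix (Fin n) (Fin n) ℝ) := by
        ext i j; by_cases h : i = j <;> simp [Matrix.diagonal_apply, Matrix.one_apply, h]
      rw [this, Matrix.mul_smul, Matrix.smul_mul, Matrix.mul_one, hVV']
    have h2 : diagonal (fun i => hM.eigenvalues i - c)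
        = diagonal hM.eigenvalues - diagonal (fun _ => c) := by
      rw [Matrix.diagonal_sub]
    rw [h2, Matrix.mul_sub, Matrix.sub_mul, ← hspec, ← h1]
  rw [hshift]
  have htr : (V * diagonal (fun i => hM.eigenvalues i - c) * star V * X).trace
      = (diagonal (fun i => hM.eigenvalues i - c) * (star V * X * V)).trace := by
    rw [show V * diagonal (fun i => hM.eigenvalues i - c) * star V * X
        = V * (diagonal (fun i => hM.eigenvalues i - c) * (star V * X)) from by
      simp [Matrix.mul_assoc], Matrix.trace_mul_comm,
      show diagonal (fun i => hM.eigenvalues i - c) * (star V * X) * V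
        = diagonal (fun i => hM.eigenvalues i - c) * (star V * X * V) from by
      simp [Matrix.mul_assoc]]
  rw [htr]
  have hdiag : (diagonal (fun i => hM.eigenvalues i - c) * (star V * X * V)).trace
      = ∑ i, (hM.eigenvalues i - c) * (star V * X * V) i i := by
    simp [Matrix.trace, Matrix.diag, Matrix.diagonal_mul]
  rw [hdiag]
  apply Finset.sum_le_sum
  intro i _
  -- the i-th diagonal entry of star V * X * V is vᵀ X v with v the i-th column of V
  set v : Fin n → ℝ := fun j => V j i with hv
  have hcol : (star V * X * V) i i = v ⬝ᵥ (X *ᵥ v) := by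
    simp only [Matrix.mul_apply, Matrix.star_apply, star_trivial, dotProduct,
      Matrix.mulVec, Finset.sum_mul, Finset.mul_sum, hv]
    rw [Finset.sum_comm]
    apply Finset.sum_congr rfl; intro j _
    apply Finset.sum_congr rfl; intro k _
    ring
  have hnorm : v ⬝ᵥ v = 1 := by
    have : (star V * V) i i = v ⬝ᵥ v := by
      simp [Matrix.mul_apply, Matrix.star_apply, dotProduct, hv]
    rw [← this, hVV]; simp [Matrix.one_apply]
  calc (hM.eigenvalues i - c) * (star V * X * V) i i
      ≤ |(hM.eigenvalues i - c) * (star V * X * V) i i| := le_abs_self _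
    _ = |hM.eigenvalues i - c| * |(star V * X * V) i i| := abs_mul _ _
    _ ≤ |hM.eigenvalues i - c| * 1 := by
        apply mul_le_mul_of_nonneg_left _ (abs_nonneg _)
        rw [hcol, ← hnorm]; exact hX v
    _ = |hM.eigenvalues i - c| := mul_one _

/-- Quadratic form bound for `V * diagonal d * Vᵀ` with `V` unitary, `|d i| ≤ 1`. -/
private lemma quad_bound (V : Matrix (Fin n) (Fin n) ℝ) (hV : V * Vᵀ = 1)
    (d : Fin n → ℝ) (hd : ∀ i, |d i| ≤ 1) (v : Fin n → ℝ) :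
    |v ⬝ᵥ ((V * diagonal d * Vᵀ) *ᵥ v)| ≤ v ⬝ᵥ v := by
  have hform : v ⬝ᵥ ((V * diagonal d * Vᵀ) *ᵥ v)
      = ∑ i, d i * ((Vᵀ *ᵥ v) i * (Vᵀ *ᵥ v) i) := by
    rw [← Matrix.mulVec_mulVec, ← Matrix.mulVec_mulVec, Matrix.dotProduct_mulVec,
      ← Matrix.mulVec_transpose]
    simp only [dotProduct, Matrix.mulVec_diagonal]
    exact Finset.sum_congr rfl fun i _ => by ring
  have hww : ∑ i, (Vᵀ *ᵥ v) i * (Vᵀ *ᵥ v) i = v ⬝ᵥ v := by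
    have h1 : (Vᵀ *ᵥ v) ⬝ᵥ (Vᵀ *ᵥ v) = ((Vᵀ *ᵥ v) ᵥ* Vᵀ) ⬝ᵥ v :=
      Matrix.dotProduct_mulVec _ _ _
    have h2 : ((Vᵀ *ᵥ v) ᵥ* Vᵀ) = V *ᵥ (Vᵀ *ᵥ v) := Matrix.vecMul_transpose _ _
    have h3 : (V *ᵥ (Vᵀ *ᵥ v)) = (V * Vᵀ) *ᵥ v := Matrix.mulVec_mulVec _ _ _
    calc ∑ i, (Vᵀ *ᵥ v) i * (Vᵀ *ᵥ v) i = (Vᵀ *ᵥ v) ⬝ᵥ (Vᵀ *ᵥ v) := rfl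
      _ = ((V * Vᵀ) *ᵥ v) ⬝ᵥ v := by rw [h1, h2, h3]
      _ = v ⬝ᵥ v := by rw [hV]; simp
  calc |v ⬝ᵥ ((V * diagonal d * Vᵀ) *ᵥ v)|
      = |∑ i, d i * ((Vᵀ *ᵥ v) i * (Vᵀ *ᵥ v) i)| := by rw [hform]
    _ ≤ ∑ i, |d i * ((Vᵀ *ᵥ v) i * (Vᵀ *ᵥ v) i)| := Finset.abs_sum_le_sum_abs _ _
    _ ≤ ∑ i, (Vᵀ *ᵥ v) i * (Vᵀ *ᵥ v) i := by
        apply Finset.sum_le_sum; intro i _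
        rw [abs_mul, abs_mul_self]
        calc |d i| * ((Vᵀ *ᵥ v) i * (Vᵀ *ᵥ v) i)
            ≤ 1 * ((Vᵀ *ᵥ v) i * (Vᵀ *ᵥ v) i) :=
              mul_le_mul_of_nonneg_right (hd i) (mul_self_nonneg _)
          _ = (Vᵀ *ᵥ v) i * (Vᵀ *ᵥ v) i := one_mul _
    _ = v ⬝ᵥ v := hww

private lemma trace_conj (V P : Matrix (Fin n) (Fin n) ℝ) (h : Vᵀ * V = 1) :
    (V * P * Vᵀ).trace = P.trace := by
  rw [Matrix.trace_mul_comm, ← Matrix.mul_assoc, h, Matrix.one_mul]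

end WLEaux

/-- For a bipartite graph `G` on `n` vertices with vertex weight `ω`,
`LE_ω(G) ≥ E(G)`. -/
theorem weighted_laplacian_energy_ge_energy_of_bipartite
    (n : ℕ) (hn : 0 < n) (G : SimpleGraph (Fin n)) [DecidableRel G.Adj]
    (hbip : G.Colorable 2)
    (ω : Fin n → ℝ) (hω : ∀ i, 0 < ω i)
    (hL : (Matrix.diagonal ω - G.adjMatrix ℝ).IsHermitian)
    (hA : (G.adjMatrix ℝ).IsHermitian) :
    ∑ i, |hA.eigenvalues i| ≤ ∑ i, |hL.eigenvalues i - (∑ j, ω j) / n| := by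
  classical
  set A : Matrix (Fin n) (Fin n) ℝ := G.adjMatrix ℝ with hAdef
  set c : ℝ := (∑ j, ω j) / n with hc
  set L : Matrix (Fin n) (Fin n) ℝ := Matrix.diagonal ω - A with hLdef
  -- eigenvector unitary of A, over ℝ star = transpose
  set V : Matrix (Fin n) (Fin n) ℝ := (hA.eigenvectorUnitary : Matrix (Fin n) (Fin n) ℝ) with hV
  have hVt : star V = Vᵀ := WLEaux.star_eq_transpose V
  have hVV : Vᵀ * V = 1 := by
    have := Matrix.mem_unitaryGroup_iff'.mp hA.eigenvectorUnitary.2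
    rwa [← hV, hVt] at this
  have hVV' : V * Vᵀ = 1 := by
    have := Matrix.mem_unitaryGroup_iff.mp hA.eigenvectorUnitary.2
    rwa [← hV, hVt] at this
  have hspecA : A = V * Matrix.diagonal hA.eigenvalues * Vᵀ := by
    have := hA.spectral_theorem
    rw [← hVt]
    simpa using this
  -- sign of eigenvalues
  set s : Fin n → ℝ := fun i => if hA.eigenvalues i < 0 then -1 else 1 with hs
  have hs_abs : ∀ i, |s i| ≤ 1 := by
    intro i; rw [hs]; dsimp only; split <;> simp
  have hs_mul : ∀ i, hA.eigenvalues i * s i = |hA.eigenvalues i| := by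
    intro i; rw [hs]; dsimp only
    rcases lt_trichotomy (hA.eigenvalues i) 0 with h | h | h
    · rw [if_pos h, abs_of_neg h]; ring
    · simp [h]
    · rw [if_neg (not_lt.mpr h.le), abs_of_pos h]; ring
  set X : Matrix (Fin n) (Fin n) ℝ := V * Matrix.diagonal s * Vᵀ with hX
  -- trace(A * X) = Σ |λ i|
  have htraceAX : (A * X).trace = ∑ i, |hA.eigenvalues i| := by
    have hprod : A * X = V * (Matrix.diagonal hA.eigenvalues * Matrix.diagonal s) * Vᵀ := by
      have h1 : A * X
          = (V * Matrix.diagonal hA.eigenvalues * Vᵀ) * (V * Matrix.diagonal s * Vᵀ) := by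
        rw [← hspecA, ← hX]
      rw [h1]
      simp only [Matrix.mul_assoc]
      rw [← Matrix.mul_assoc Vᵀ V, hVV, Matrix.one_mul]
    rw [hprod, WLEaux.trace_conj V _ hVV, Matrix.diagonal_mul_diagonal]
    simp [Matrix.trace, Matrix.diag, hs_mul]
  -- signature matrix from the 2-coloring
  obtain ⟨C⟩ := hbip
  set t : Fin n → ℝ := fun i => if C i = 0 then 1 else -1 with ht
  have ht_sq : ∀ i, t i * t i = 1 := by
    intro i; rw [ht]; dsimp only; split <;> norm_num
  set S : Matrix (Fin n) (Fin n) ℝ := Matrix.diagonal t with hS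
  have hSS : S * S = 1 := by
    rw [hS, Matrix.diagonal_mul_diagonal]
    convert Matrix.diagonal_one using 2
    ext i; exact ht_sq i
  have hSt : Sᵀ = S := by rw [hS, Matrix.diagonal_transpose]
  -- S A S = -A
  have hSAS : S * A * S = -A := by
    ext i j
    rw [hS]
    simp only [Matrix.diagonal_mul, Matrix.mul_diagonal, Matrix.neg_apply, hAdef,
      SimpleGraph.adjMatrix_apply]
    by_cases hadj : G.Adj i j
    · rw [if_pos hadj]
      have hne : C i ≠ C j := C.valid hadj
      have : t i * t j = -1 := by
        rw [ht]; dsimp only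
        by_cases h : C i = 0
        · rw [if_pos h, if_neg (fun hj => hne (h.trans hj.symm))]; norm_num
        · rw [if_neg h]
          have hi1 : C i = 1 := by omega
          have hj : C j = 0 := by
            have : C j ≠ 1 := fun hj1 => hne (hi1.trans hj1.symm)
            omega
          rw [if_pos hj]; norm_num
      calc t i * (1 : ℝ) * t j = t i * t j := by ring
        _ = -1 := this
    · rw [if_neg hadj]; ring
  -- S L' S - L' = 2 A  where L' = L - c • 1
  set L' : Matrix (Fin n) (Fin n) ℝ := L - c • 1 with hL'
  have hSdiag : S * Matrix.diagonal ω * S = Matrix.diagonal ω := by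
    rw [hS, Matrix.diagonal_mul_diagonal, Matrix.diagonal_mul_diagonal]
    have : (fun i => t i * ω i * t i) = ω := by
      funext i
      calc t i * ω i * t i = (t i * t i) * ω i := by ring
        _ = ω i := by rw [ht_sq]; ring
    rw [this]
  have hSone : S * (c • (1 : Matrix (Fin n) (Fin n) ℝ)) * S = c • 1 := by
    rw [Matrix.mul_smul, Matrix.smul_mul, Matrix.mul_one, hSS]
  have hSLS : S * L' * S = Matrix.diagonal ω + A - c • 1 := by
    rw [hL', hLdef]
    simp only [Matrix.mul_sub, Matrix.sub_mul]
    rw [hSdiag, hSAS, hSone]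
    abel
  have hdiff : S * L' * S - L' = A + A := by
    rw [hSLS, hL', hLdef]; abel
  -- quadratic form bounds
  have hXq : ∀ v : Fin n → ℝ, |v ⬝ᵥ ((S * X * S) *ᵥ v)| ≤ v ⬝ᵥ v := by
    intro v
    have hrew : S * X * S = (S * V) * Matrix.diagonal s * (S * V)ᵀ := by
      rw [Matrix.transpose_mul, hSt, hX]
      simp only [Matrix.mul_assoc]
    have hSVu : (S * V) * (S * V)ᵀ = 1 := by
      rw [Matrix.transpose_mul, hSt]
      simp only [Matrix.mul_assoc]
      rw [← Matrix.mul_assoc V Vᵀ, hVV', Matrix.one_mul, hSS]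
    rw [hrew]
    exact WLEaux.quad_bound (S * V) hSVu s hs_abs v
  have hXq' : ∀ v : Fin n → ℝ, |v ⬝ᵥ ((-X) *ᵥ v)| ≤ v ⬝ᵥ v := by
    intro v
    have : -X = V * Matrix.diagonal (fun i => -(s i)) * Vᵀ := by
      rw [hX]
      have : Matrix.diagonal (fun i => -(s i)) = -(Matrix.diagonal s) := by
        ext i j; by_cases h : i = j <;> simp [Matrix.diagonal_apply, h]
      rw [this, Matrix.mul_neg, Matrix.neg_mul]
    rw [this]
    exact WLEaux.quad_bound V hVV' _ (fun i => by rw [abs_neg]; exact hs_abs i) v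
  -- the two trace bounds
  have hb1 : (L' * (S * X * S)).trace ≤ ∑ i, |hL.eigenvalues i - c| := by
    have := WLEaux.trace_shift_mul_le L hL c (S * X * S) hXq
    rwa [← hL'] at this
  have hb2 : (L' * (-X)).trace ≤ ∑ i, |hL.eigenvalues i - c| := by
    have := WLEaux.trace_shift_mul_le L hL c (-X) hXq'
    rwa [← hL'] at this
  -- combine: 2 tr(A X) = tr(L' (S X S)) + tr(L' (-X))
  have hkey : 2 * (A * X).trace = (L' * (S * X * S)).trace + (L' * (-X)).trace := by
    have h1 : (L' * (S * X * S)).trace = ((S * L' * S) * X).trace := by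
      have e1 : L' * (S * X * S) = (L' * S * X) * S := by simp only [Matrix.mul_assoc]
      have e2 : S * (L' * S * X) = (S * L' * S) * X := by simp only [Matrix.mul_assoc]
      rw [e1, Matrix.trace_mul_comm, e2]
    have h2 : (L' * (-X)).trace = -((L' * X).trace) := by
      rw [Matrix.mul_neg, Matrix.trace_neg]
    rw [h1, h2]
    have h3 : ((S * L' * S - L') * X).trace = (S * L' * S * X).trace - (L' * X).trace := by
      rw [Matrix.sub_mul, Matrix.trace_sub]
    have h4 : ((A + A) * X).trace = 2 * (A * X).trace := by
      rw [Matrix.add_mul, Matrix.trace_add]; ring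
    have h5 : ((A + A) * X).trace = ((S * L' * S - L') * X).trace := by rw [hdiff]
    linarith [h3, h4, h5]
  have : 2 * (∑ i, |hA.eigenvalues i|) ≤ 2 * (∑ i, |hL.eigenvalues i - c|) := by
    rw [← htraceAX]
    calc 2 * (A * X).trace = (L' * (S * X * S)).trace + (L' * (-X)).trace := hkey
      _ ≤ (∑ i, |hL.eigenvalues i - c|) + (∑ i, |hL.eigenvalues i - c|) := add_le_add hb1 hb2
      _ = 2 * (∑ i, |hL.eigenvalues i - c|) := by ring
  linarith
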